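/- For every positive integer m, det[(binom(n, i+j-1))_{i,j=1}^m] = (-1)^(m(m-1)/2) binom(n,m) ∏_{k=1}^{m-1} binom(n+k, n-k) / binom(m+k, m-k), where n ≥ m is a positive integer (or n an indeterminate, the identity holding as polynomials in n). -/

import Mathlib

open Finset Matrix Polynomial

namespace BinHankelAux

/-- The intermediate matrix family for the column reduction. -/
def G (n m c : ℕ) : Matrix (Fin m) (Fin m) ℚ :=
  Matrix.of fun i j =>
    (∏ t ∈ Finset.Icc ((j : ℕ) + 2 + c) m, (((i : ℕ) : ℚ) + (t : ℚ))) *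
      (∏ s ∈ Finset.Icc 1 (j : ℕ), ((n : ℚ) - (s : ℚ) - ((i : ℕ) : ℚ)))

lemma det_G_step (n m c : ℕ) :
    (G n m c).det = ((n : ℚ) + c + 1) ^ (m - 1 - c) * (G n m (c + 1)).det := by
  classical
  set U : Matrix (Fin m) (Fin m) ℚ :=
    1 + Matrix.of (fun k j : Fin m =>
      if (k : ℕ) = (j : ℕ) + 1 ∧ (j : ℕ) + c + 2 ≤ m then 1 else 0) with hUdef
  have hUtri : U.BlockTriangular OrderDual.toDual := by
    intro i j hij
    have hij' : (i : ℕ) < (j : ℕ) := hij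
    simp only [hUdef, Matrix.add_apply, Matrix.one_apply, Matrix.of_apply]
    rw [if_neg, if_neg]
    · ring
    · rintro ⟨h1, -⟩; omega
    · rintro rfl; omega
  have hUdet : U.det = 1 := by
    rw [Matrix.det_of_lowerTriangular U hUtri]
    apply Finset.prod_eq_one
    intro i _
    simp only [hUdef, Matrix.add_apply, Matrix.one_apply_eq, Matrix.of_apply]
    rw [if_neg]
    · ring
    · rintro ⟨h1, -⟩; omega
  have hmul : G n m c * U = Matrix.of (fun i j : Fin m =>
      (if (j : ℕ) + c + 2 ≤ m then ((n : ℚ) + c + 1) else 1) * G n m (c + 1) i j) := by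
    ext i j
    rw [Matrix.mul_apply]
    simp only [hUdef, Matrix.add_apply, Matrix.one_apply, Matrix.of_apply, mul_add, mul_ite,
      mul_one, mul_zero]
    rw [Finset.sum_add_distrib, Finset.sum_ite_eq' Finset.univ j (fun k => G n m c i k)]
    simp only [Finset.mem_univ, if_true]
    by_cases hP : (j : ℕ) + c + 2 ≤ m
    · have hj1 : (j : ℕ) + 1 < m := by omega
      have hsum : (∑ k : Fin m, if (k : ℕ) = (j : ℕ) + 1 ∧ (j : ℕ) + c + 2 ≤ m
          then G n m c i k else 0) = G n m c i ⟨(j : ℕ) + 1, hj1⟩ := by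
        rw [Finset.sum_eq_single (⟨(j : ℕ) + 1, hj1⟩ : Fin m)]
        · rw [if_pos ⟨rfl, hP⟩]
        · intro k _ hk
          rw [if_neg]
          rintro ⟨h1, -⟩
          exact hk (Fin.ext h1)
        · intro h; exact absurd (Finset.mem_univ _) h
      rw [hsum, if_pos hP]
      -- now the entry identity
      show G n m c i j + G n m c i ⟨(j : ℕ) + 1, hj1⟩
          = ((n : ℚ) + c + 1) * G n m (c + 1) i j
      simp only [G, Matrix.of_apply]
      have e1 : Finset.Icc ((j : ℕ) + 2 + c) m = Finset.Ico ((j : ℕ) + 2 + c) (m + 1) := by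
        rw [Finset.Ico_add_one_right_eq_Icc]
      have e2 : Finset.Icc ((j : ℕ) + 3 + c) m = Finset.Ico ((j : ℕ) + 3 + c) (m + 1) := by
        rw [Finset.Ico_add_one_right_eq_Icc]
      have h1 : (∏ t ∈ Finset.Icc ((j : ℕ) + 2 + c) m, (((i : ℕ) : ℚ) + (t : ℚ)))
          = (((i : ℕ) : ℚ) + (((j : ℕ) + 2 + c : ℕ) : ℚ)) *
            ∏ t ∈ Finset.Icc ((j : ℕ) + 3 + c) m, (((i : ℕ) : ℚ) + (t : ℚ)) := by
        rw [e1, Finset.prod_eq_prod_Ico_succ_bot (by omega)]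
        rw [show (j : ℕ) + 2 + c + 1 = (j : ℕ) + 3 + c from by omega, Finset.Ico_add_one_right_eq_Icc]
      have h2 : (∏ s ∈ Finset.Icc 1 ((j : ℕ) + 1), ((n : ℚ) - (s : ℚ) - ((i : ℕ) : ℚ)))
          = (∏ s ∈ Finset.Icc 1 (j : ℕ), ((n : ℚ) - (s : ℚ) - ((i : ℕ) : ℚ))) *
            ((n : ℚ) - (((j : ℕ) + 1 : ℕ) : ℚ) - ((i : ℕ) : ℚ)) := by
        rw [Finset.prod_Icc_succ_top (by omega)]
      rw [h1, h2, show (j : ℕ) + 1 + 2 + c = (j : ℕ) + 3 + c from by omega,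
        show (j : ℕ) + 2 + (c + 1) = (j : ℕ) + 3 + c from by omega]
      push_cast
      ring
    · rw [if_neg hP]
      have hsum : (∑ k : Fin m, if (k : ℕ) = (j : ℕ) + 1 ∧ (j : ℕ) + c + 2 ≤ m
          then G n m c i k else 0) = 0 := by
        apply Finset.sum_eq_zero
        intro k _
        rw [if_neg]; rintro ⟨-, h2⟩; exact hP h2
      rw [hsum, add_zero, one_mul]
      simp only [G, Matrix.of_apply]
      have e1 : Finset.Icc ((j : ℕ) + 2 + c) m = ∅ := by
        apply Finset.Icc_eq_empty; omega
      have e2 : Finset.Icc ((j : ℕ) + 2 + (c + 1)) m = ∅ := by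
        apply Finset.Icc_eq_empty; omega
      rw [e1, e2]
  have key : (G n m c).det = (∏ j : Fin m,
      (if (j : ℕ) + c + 2 ≤ m then ((n : ℚ) + c + 1) else 1)) * (G n m (c + 1)).det := by
    calc (G n m c).det = (G n m c).det * U.det := by rw [hUdet, mul_one]
    _ = (G n m c * U).det := (Matrix.det_mul _ _).symm
    _ = _ := by rw [hmul]; exact Matrix.det_mul_row _ _
  rw [key]
  congr 1
  rw [Fin.prod_univ_eq_prod_range (fun j => if j + c + 2 ≤ m then ((n : ℚ) + c + 1) else 1) m]
  have : ∀ j ∈ Finset.range m, (if j + c + 2 ≤ m then ((n : ℚ) + c + 1) else 1)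
      = (if j < m - 1 - c then ((n : ℚ) + c + 1) else 1) := by
    intro j _
    congr 1
    simp only [eq_iff_iff]
    omega
  rw [Finset.prod_congr rfl this, ← Finset.prod_filter]
  have : (Finset.range m).filter (fun j => j < m - 1 - c) = Finset.range (m - 1 - c) := by
    ext j
    simp only [Finset.mem_filter, Finset.mem_range]
    omega
  rw [this]
  simp
lemma det_G_fold (n m : ℕ) : (G n m 0).det =
    (∏ c ∈ Finset.range (m - 1), ((n : ℚ) + c + 1) ^ (m - 1 - c)) * (G n m (m - 1)).det := by
  have aux : ∀ k, k ≤ m - 1 → (G n m (m - 1 - k)).det =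
      (∏ c ∈ Finset.Ico (m - 1 - k) (m - 1), ((n : ℚ) + c + 1) ^ (m - 1 - c)) *
        (G n m (m - 1)).det := by
    intro k
    induction k with
    | zero => intro _; simp
    | succ k ih =>
      intro hk
      have h1 : m - 1 - (k + 1) < m - 1 := by omega
      rw [det_G_step, show m - 1 - (k + 1) + 1 = m - 1 - k from by omega, ih (by omega),
        Finset.prod_eq_prod_Ico_succ_bot h1, show m - 1 - (k + 1) + 1 = m - 1 - k from by omega]
      ring
  have h := aux (m - 1) le_rfl
  rw [show m - 1 - (m - 1) = 0 from by omega] at h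
  rw [h, Finset.range_eq_Ico]

lemma det_G_base (n M : ℕ) :
    (G n (M + 1) M).det = (-1 : ℚ) ^ ((M + 1) * M / 2) * (Nat.superFactorial M : ℚ) := by
  have hG : G n (M + 1) M = Matrix.of (fun i j : Fin (M + 1) =>
      ((-1 : ℚ) ^ (j : ℕ)) *
        ((∏ s ∈ Finset.Icc 1 (j : ℕ), (X - C ((n : ℚ) - s))).eval ((i : ℕ) : ℚ))) := by
    ext i j
    simp only [G, Matrix.of_apply]
    have e1 : Finset.Icc ((j : ℕ) + 2 + M) (M + 1) = ∅ := Finset.Icc_eq_empty (by omega)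
    rw [e1, Finset.prod_empty, one_mul, Polynomial.eval_prod]
    have h2 : ∀ s ∈ Finset.Icc 1 (j : ℕ),
        (X - C ((n : ℚ) - s)).eval ((i : ℕ) : ℚ) = -(((n : ℚ) - s - ((i : ℕ) : ℚ))) := by
      intro s _
      simp only [Polynomial.eval_sub, Polynomial.eval_X, Polynomial.eval_C]
      ring
    rw [Finset.prod_congr rfl h2]
    have h3 : ∏ s ∈ Finset.Icc 1 (j : ℕ), -((n : ℚ) - s - ((i : ℕ) : ℚ))
        = (-1 : ℚ) ^ (Finset.Icc 1 (j : ℕ)).card *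
          ∏ s ∈ Finset.Icc 1 (j : ℕ), ((n : ℚ) - s - ((i : ℕ) : ℚ)) := by
      rw [← Finset.prod_const, ← Finset.prod_mul_distrib]
      apply Finset.prod_congr rfl
      intros; ring
    rw [h3, Nat.card_Icc]
    rw [Nat.add_sub_cancel, ← mul_assoc, ← pow_add]
    rw [(Even.neg_one_pow ⟨(j : ℕ), rfl⟩ : ((-1 : ℚ)) ^ ((j : ℕ) + (j : ℕ)) = 1), one_mul]
  rw [hG]
  have hdeg : ∀ j : Fin (M + 1),
      (∏ s ∈ Finset.Icc 1 (j : ℕ), (X - C ((n : ℚ) - s))).natDegree = (j : ℕ) := by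
    intro j
    rw [Polynomial.natDegree_prod _ _ (fun s _ => Polynomial.X_sub_C_ne_zero _),
      Finset.sum_congr rfl (fun s _ => Polynomial.natDegree_X_sub_C _), Finset.sum_const,
      Nat.card_Icc, smul_eq_mul, mul_one, Nat.add_sub_cancel]
  have hmonic : ∀ j : Fin (M + 1),
      (∏ s ∈ Finset.Icc 1 (j : ℕ), (X - C ((n : ℚ) - s))).Monic := by
    intro j
    exact Polynomial.monic_prod_of_monic _ _ (fun s _ => Polynomial.monic_X_sub_C _)
  have step1 : (Matrix.of (fun i j : Fin (M + 1) =>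
      ((-1 : ℚ) ^ (j : ℕ)) *
        ((∏ s ∈ Finset.Icc 1 (j : ℕ), (X - C ((n : ℚ) - s))).eval ((i : ℕ) : ℚ)))).det
      = (∏ j : Fin (M + 1), (-1 : ℚ) ^ (j : ℕ)) *
        (Matrix.of (fun i j : Fin (M + 1) =>
          (∏ s ∈ Finset.Icc 1 (j : ℕ), (X - C ((n : ℚ) - s))).eval ((i : ℕ) : ℚ))).det :=
    Matrix.det_mul_row _ _
  rw [step1, ← Matrix.det_eval_matrixOfPolynomials_eq_det_vandermonde
    (fun i : Fin (M + 1) => ((i : ℕ) : ℚ)) _ hdeg hmonic]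
  rw [Matrix.det_vandermonde_id_eq_superFactorial]
  congr 1
  rw [Finset.prod_pow_eq_pow_sum]
  congr 1
  rw [Fin.sum_univ_eq_sum_range (fun j => j) (M + 1), Finset.sum_range_id]
  simp
lemma nat_prod_fact (a b M : ℕ) (h : b ≤ M) :
    (a + b).factorial * ∏ t ∈ Finset.Icc (b + 1) M, (a + t) = (a + M).factorial := by
  induction M, h using Nat.le_induction with
  | base => simp
  | succ M hbM ih =>
    rw [Finset.prod_Icc_succ_top (by omega), ← mul_assoc, ih,
      show a + (M + 1) = (a + M) + 1 from by omega, Nat.factorial_succ]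
    ring

lemma nat_prod_fact2 (n i : ℕ) :
    ∀ j, i + j + 1 ≤ n →
      (n - 1 - i - j).factorial * ∏ s ∈ Finset.Icc 1 j, (n - i - s) = (n - 1 - i).factorial := by
  intro j
  induction j with
  | zero => intro _; simp
  | succ j ih =>
    intro h
    have e1 : n - i - (j + 1) = (n - 1 - i - (j + 1)) + 1 := by omega
    have e2 : n - 1 - i - (j + 1) + 1 = n - 1 - i - j := by omega
    calc (n - 1 - i - (j + 1)).factorial * ∏ s ∈ Finset.Icc 1 (j + 1), (n - i - s)
        = ((n - i - (j + 1)) * (n - 1 - i - (j + 1)).factorial) *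
            ∏ s ∈ Finset.Icc 1 j, (n - i - s) := by
          rw [Finset.prod_Icc_succ_top (by omega)]; ring
      _ = (n - 1 - i - j).factorial * ∏ s ∈ Finset.Icc 1 j, (n - i - s) := by
          rw [e1, ← Nat.factorial_succ, e2]
      _ = (n - 1 - i).factorial := ih (by omega)

lemma entry_eq (n m : ℕ) (hmn : m ≤ n) (i j : Fin m) :
    ((n.choose ((i : ℕ) + (j : ℕ) + 1)) : ℚ) =
      ((n.factorial : ℚ) / ((((i : ℕ) + m).factorial : ℚ) * ((n - 1 - (i : ℕ)).factorial : ℚ)))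
        * G n m 0 i j := by
  have hi : (i : ℕ) < m := i.isLt
  have hj : (j : ℕ) < m := j.isLt
  have hGento : G n m 0 i j =
      (∏ t ∈ Finset.Icc ((j : ℕ) + 2) m, (((i : ℕ) : ℚ) + (t : ℚ))) *
        (∏ s ∈ Finset.Icc 1 (j : ℕ), ((n : ℚ) - (s : ℚ) - ((i : ℕ) : ℚ))) := by
    simp [G]
  rw [hGento]
  by_cases h : (i : ℕ) + (j : ℕ) + 1 ≤ n
  · have h1 := nat_prod_fact (i : ℕ) ((j : ℕ) + 1) m (by omega)
    have h2 := nat_prod_fact2 n (i : ℕ) (j : ℕ) h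
    have h1Q : (((i : ℕ) + (j : ℕ) + 1).factorial : ℚ) *
        (∏ t ∈ Finset.Icc ((j : ℕ) + 2) m, (((i : ℕ) : ℚ) + (t : ℚ)))
        = (((i : ℕ) + m).factorial : ℚ) := by
      have := congrArg (Nat.cast : ℕ → ℚ) h1
      push_cast at this
      rw [show (i : ℕ) + ((j : ℕ) + 1) = (i : ℕ) + (j : ℕ) + 1 from by omega,
        show (j : ℕ) + 1 + 1 = (j : ℕ) + 2 from by omega] at this
      exact this
    have h2Q : ((n - 1 - (i : ℕ) - (j : ℕ)).factorial : ℚ) *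
        (∏ s ∈ Finset.Icc 1 (j : ℕ), ((n : ℚ) - (s : ℚ) - ((i : ℕ) : ℚ)))
        = ((n - 1 - (i : ℕ)).factorial : ℚ) := by
      have hcongr : ∀ s ∈ Finset.Icc 1 (j : ℕ),
          ((n : ℚ) - (s : ℚ) - ((i : ℕ) : ℚ)) = (((n - (i : ℕ) - s : ℕ)) : ℚ) := by
        intro s hs
        rw [Finset.mem_Icc] at hs
        have : (i : ℕ) + s ≤ n := by omega
        push_cast [Nat.cast_sub (by omega : s ≤ n - (i : ℕ)), Nat.cast_sub (by omega : (i:ℕ) ≤ n)]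
        ring
      rw [Finset.prod_congr rfl hcongr, ← Nat.cast_prod, ← Nat.cast_mul, h2]
    have hfne : ∀ k : ℕ, ((k.factorial : ℚ)) ≠ 0 := fun k =>
      Nat.cast_ne_zero.mpr (Nat.factorial_ne_zero k)
    have hT1 : (∏ t ∈ Finset.Icc ((j : ℕ) + 2) m, (((i : ℕ) : ℚ) + (t : ℚ)))
        = (((i : ℕ) + m).factorial : ℚ) / (((i : ℕ) + (j : ℕ) + 1).factorial : ℚ) := by
      rw [eq_div_iff (hfne _)]
      rw [mul_comm] at h1Q
      exact h1Q
    have hT2 : (∏ s ∈ Finset.Icc 1 (j : ℕ), ((n : ℚ) - (s : ℚ) - ((i : ℕ) : ℚ)))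
        = ((n - 1 - (i : ℕ)).factorial : ℚ) / ((n - 1 - (i : ℕ) - (j : ℕ)).factorial : ℚ) := by
      rw [eq_div_iff (hfne _)]
      rw [mul_comm] at h2Q
      exact h2Q
    rw [Nat.cast_choose ℚ h, hT1, hT2,
      show n - ((i : ℕ) + (j : ℕ) + 1) = n - 1 - (i : ℕ) - (j : ℕ) from by omega]
    field_simp
    try ring
  · rw [Nat.choose_eq_zero_of_lt (by omega)]
    have hzero : (∏ s ∈ Finset.Icc 1 (j : ℕ), ((n : ℚ) - (s : ℚ) - ((i : ℕ) : ℚ))) = 0 := by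
      apply Finset.prod_eq_zero (i := n - (i : ℕ))
      · rw [Finset.mem_Icc]; omega
      · rw [Nat.cast_sub (by omega : (i : ℕ) ≤ n)]
        ring
    rw [hzero]
    simp

lemma key1 (n : ℕ) : ∀ k : ℕ, ((n + k + 1).factorial : ℚ)
    = (n.factorial : ℚ) * ∏ d ∈ Finset.range (k + 1), ((n : ℚ) + d + 1) := by
  intro k
  induction k with
  | zero => simp [Nat.factorial_succ, mul_comm]
  | succ k ih =>
    rw [Finset.prod_range_succ, ← mul_assoc, ← ih,
      show n + (k + 1) + 1 = (n + k + 1) + 1 from by omega, Nat.factorial_succ]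
    push_cast
    ring

lemma key2 (f : ℕ → ℚ) : ∀ M : ℕ,
    ∏ k ∈ Finset.range M, ∏ d ∈ Finset.range (k + 1), f d
      = ∏ d ∈ Finset.range M, (f d) ^ (M - d) := by
  intro M
  induction M with
  | zero => simp
  | succ M ih =>
    rw [Finset.prod_range_succ (fun k => ∏ d ∈ Finset.range (k + 1), f d) M, ih,
      Finset.prod_range_succ f M]
    conv_rhs => rw [Finset.prod_range_succ]
    rw [show M + 1 - M = 1 from by omega, pow_one, ← mul_assoc, ← Finset.prod_mul_distrib]
    congr 1
    exact Finset.prod_congr rfl fun d hd => by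
      rw [Finset.mem_range] at hd
      rw [show M + 1 - d = (M - d) + 1 from by omega, pow_succ]

lemma prod_pows (n M : ℕ) :
    ∏ c ∈ Finset.range M, ((n : ℚ) + c + 1) ^ (M - c)
      = (∏ k ∈ Finset.range M, ((n + k + 1).factorial : ℚ)) / (n.factorial : ℚ) ^ M := by
  rw [eq_div_iff (pow_ne_zero _ (Nat.cast_ne_zero.mpr (Nat.factorial_ne_zero n)))]
  rw [Finset.prod_congr rfl (fun k _ => key1 n k), Finset.prod_mul_distrib,
    Finset.prod_const, key2, Finset.card_range]
  ring

lemma scalar_id (n M : ℕ) (hmn : M + 1 ≤ n) :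
    (∏ i : Fin (M + 1), ((n.factorial : ℚ) /
        ((((i : ℕ) + (M + 1)).factorial : ℚ) * ((n - 1 - (i : ℕ)).factorial : ℚ))))
      * (∏ c ∈ Finset.range M, ((n : ℚ) + c + 1) ^ (M - c)) * (Nat.superFactorial M : ℚ)
    = (n.choose (M + 1) : ℚ) *
        ∏ k ∈ Finset.Icc 1 M,
          ((n + k).choose (n - k) : ℚ) / ((M + 1 + k).choose (M + 1 - k) : ℚ) := by
  have hfne : ∀ k : ℕ, ((k.factorial : ℚ)) ≠ 0 := fun k =>
    Nat.cast_ne_zero.mpr (Nat.factorial_ne_zero k)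
  set P1 := ∏ k ∈ Finset.range M, ((n + k + 1).factorial : ℚ) with hP1
  set P2 := ∏ k ∈ Finset.range M, ((M + k + 2).factorial : ℚ) with hP2
  set P3 := ∏ k ∈ Finset.range M, ((n - (k + 1)).factorial : ℚ) with hP3
  set P4 := ∏ k ∈ Finset.range M, ((M - k).factorial : ℚ) with hP4
  have hP1ne : P1 ≠ 0 := Finset.prod_ne_zero_iff.mpr (fun k _ => hfne _)
  have hP2ne : P2 ≠ 0 := Finset.prod_ne_zero_iff.mpr (fun k _ => hfne _)
  have hP3ne : P3 ≠ 0 := Finset.prod_ne_zero_iff.mpr (fun k _ => hfne _)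
  have hP4ne : P4 ≠ 0 := Finset.prod_ne_zero_iff.mpr (fun k _ => hfne _)
  -- E1
  have E1 : (∏ i : Fin (M + 1), ((n.factorial : ℚ) /
      ((((i : ℕ) + (M + 1)).factorial : ℚ) * ((n - 1 - (i : ℕ)).factorial : ℚ))))
      = (n.factorial : ℚ) ^ (M + 1) /
        ((((M + 1).factorial : ℚ) * P2) * (((n - (M + 1)).factorial : ℚ) * P3)) := by
    rw [Fin.prod_univ_eq_prod_range
      (fun i => ((n.factorial : ℚ) / (((i + (M + 1)).factorial : ℚ) * ((n - 1 - i).factorial : ℚ)))),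
      Finset.prod_div_distrib, Finset.prod_const, Finset.card_range, Finset.prod_mul_distrib]
    congr 2
    · rw [Finset.prod_range_succ' (fun i => (((i + (M + 1)).factorial : ℚ))) M]
      rw [mul_comm]
      congr 1
      · norm_num
      · apply Finset.prod_congr rfl
        intro k _
        congr 2
        omega
    · rw [Finset.prod_range_succ (fun i => (((n - 1 - i).factorial : ℚ))) M]
      rw [mul_comm]
      congr 1
      · congr 2
        omega
      · apply Finset.prod_congr rfl
        intro k _
        congr 2
        omega
  -- E3
  have E3 : (Nat.superFactorial M : ℚ) = P4 := by
    rw [← Nat.prod_range_factorial_succ M]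
    push_cast
    rw [← Finset.prod_range_reflect (fun j => (((j + 1).factorial : ℚ))) M]
    apply Finset.prod_congr rfl
    intro k hk
    rw [Finset.mem_range] at hk
    congr 2
    omega
  -- E4
  have E4 : (∏ k ∈ Finset.Icc 1 M,
      ((n + k).choose (n - k) : ℚ) / ((M + 1 + k).choose (M + 1 - k) : ℚ))
      = (P1 * P4) / (P3 * P2) := by
    rw [← Finset.Ico_add_one_right_eq_Icc, Finset.prod_Ico_eq_prod_range]
    simp only [Nat.add_sub_cancel]
    have step : ∀ k ∈ Finset.range M,
        ((n + (1 + k)).choose (n - (1 + k)) : ℚ) / ((M + 1 + (1 + k)).choose (M + 1 - (1 + k)) : ℚ)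
        = (((n + k + 1).factorial : ℚ) * ((M - k).factorial : ℚ)) /
            (((n - (k + 1)).factorial : ℚ) * ((M + k + 2).factorial : ℚ)) := by
      intro k hk
      rw [Finset.mem_range] at hk
      have h1 : n - (1 + k) ≤ n + (1 + k) := by omega
      have h2 : M + 1 - (1 + k) ≤ M + 1 + (1 + k) := by omega
      rw [Nat.cast_choose ℚ h1, Nat.cast_choose ℚ h2,
        show n + (1 + k) - (n - (1 + k)) = 2 * (k + 1) from by omega,
        show M + 1 + (1 + k) - (M + 1 - (1 + k)) = 2 * (k + 1) from by omega,
        show n + (1 + k) = n + k + 1 from by omega,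
        show M + 1 + (1 + k) = M + k + 2 from by omega,
        show n - (1 + k) = n - (k + 1) from by omega,
        show M + 1 - (1 + k) = M - k from by omega]
      have e1 := hfne (2 * (k + 1))
      have e2 := hfne (n - (k + 1))
      have e3 := hfne (M - k)
      have e4 := hfne (M + k + 2)
      have e5 := hfne (n + k + 1)
      field_simp
      try ring
    rw [Finset.prod_congr rfl step, Finset.prod_div_distrib, Finset.prod_mul_distrib,
      Finset.prod_mul_distrib]
  -- E5
  have E5 : (n.choose (M + 1) : ℚ)
      = (n.factorial : ℚ) / (((M + 1).factorial : ℚ) * ((n - (M + 1)).factorial : ℚ)) :=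
    Nat.cast_choose ℚ hmn
  rw [E1, E3, E4, E5, prod_pows]
  field_simp
  ring

end BinHankelAux

open BinHankelAux in
theorem binomial_hankel_det (n m : ℕ) (hm : 0 < m) (hmn : m ≤ n) :
    Matrix.det (Matrix.of fun i j : Fin m => (n.choose ((i : ℕ) + (j : ℕ) + 1) : ℚ)) =
      (-1 : ℚ) ^ (m * (m - 1) / 2) * (n.choose m : ℚ) *
        ∏ k ∈ Finset.Icc 1 (m - 1), ((n + k).choose (n - k) : ℚ) / ((m + k).choose (m - k) : ℚ) := by
  obtain ⟨M, rfl⟩ : ∃ M, m = M + 1 := ⟨m - 1, by omega⟩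
  have hA : (Matrix.of fun i j : Fin (M + 1) => (n.choose ((i : ℕ) + (j : ℕ) + 1) : ℚ)) =
      Matrix.of (fun i j : Fin (M + 1) =>
        ((n.factorial : ℚ) /
          ((((i : ℕ) + (M + 1)).factorial : ℚ) * ((n - 1 - (i : ℕ)).factorial : ℚ))) *
          G n (M + 1) 0 i j) := by
    ext i j
    exact entry_eq n (M + 1) hmn i j
  rw [hA, Matrix.det_mul_column, det_G_fold n (M + 1)]
  simp only [Nat.add_sub_cancel]
  rw [det_G_base n M]
  have S := scalar_id n M hmn
  linear_combination ((-1 : ℚ) ^ ((M + 1) * M / 2)) * S
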